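/- Let G be a subgroup of finite index in a group π and L a crossed G-algebra over K. Fix coset representatives ω_i for i ∈ G\π. Define the transfer L̃ by L̃_α = ⊕_{i: ω_i α ω_i⁻¹ ∈ G} L_{ω_i α ω_i⁻¹} with multiplication induced componentwise from L (products of elements in different coset components are zero). Then L̃ is an associative unital π-graded algebra with unit the sum of the [π:G] copies of 1_L in L̃_1. -/

import Mathlib

/-- A crossed `G`-algebra over `K`, realized as a `G`-grading by submodules of an
ambient associative unital `K`-algebra `A`, together with a symmetric Frobenius
form `η` and an action `φ` of `G` by algebra automorphisms satisfying the axioms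
(3.1.1)–(3.2.4) of Turaev. -/
structure CrossedAlgebra (K : Type*) [CommRing K] (A : Type*) [Ring A] [Algebra K A]
    (G : Type*) [Group G] [DecidableEq G] where
  comp : G → Submodule K A
  one_mem : (1 : A) ∈ comp 1
  mul_mem : ∀ {α β : G} {a b : A}, a ∈ comp α → b ∈ comp β → a * b ∈ comp (α * β)
  internal : DirectSum.IsInternal comp
  projective : ∀ α : G, Module.Projective K (comp α)
  finite : ∀ α : G, Module.Finite K (comp α)
  η : A →ₗ[K] A →ₗ[K] K
  η_symm : ∀ a b : A, η a b = η b a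
  η_graded : ∀ {α β : G} {a b : A}, a ∈ comp α → b ∈ comp β → α * β ≠ 1 → η a b = 0
  η_nondeg : ∀ α : G,
    Function.Bijective fun a : comp α => (η (a : A)).domRestrict (comp α⁻¹)
  η_assoc : ∀ a b c : A, η (a * b) c = η a (b * c)
  φ : G →* (A ≃ₐ[K] A)
  φ_η : ∀ (β : G) (a b : A), η (φ β a) (φ β b) = η a b
  φ_comp : ∀ (β : G) {α : G} {a : A}, a ∈ comp α → φ β a ∈ comp (β * α * β⁻¹)
  φ_self : ∀ {β : G} {a : A}, a ∈ comp β → φ β a = a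
  φ_cross : ∀ {α β : G} {a b : A}, a ∈ comp α → b ∈ comp β → (φ β a) * b = b * a
  φ_trace : ∀ {α β : G} {c : A}, c ∈ comp (α * β * α⁻¹ * β⁻¹) →
    ∀ (f : comp α →ₗ[K] comp α) (g : comp β →ₗ[K] comp β),
      (∀ x : comp α, (f x : A) = c * φ β (x : A)) →
      (∀ x : comp β, (g x : A) = φ α⁻¹ (c * (x : A))) →
      LinearMap.trace K (comp α) f = LinearMap.trace K (comp β) g


open Classical in
/-- The `α`-component of the transfer `L̃` of a crossed `G`-algebra `L` along a
finite-index subgroup `G ≤ π`: as a module, `L̃ = Π_{i ∈ G\π} A`, and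
`L̃_α` consists of the families whose `i`-th entry lies in `L_{ω_i α ω_i⁻¹}` when
`ω_i α ω_i⁻¹ ∈ G`, and vanishes otherwise. -/
noncomputable def transferComp {K : Type*} [CommRing K]
    {A : Type*} [Ring A] [Algebra K A]
    {P : Type*} [Group P] (H : Subgroup P) [DecidableEq P]
    (S : CrossedAlgebra K A H)
    (ω : Quotient (QuotientGroup.rightRel H) → P) (α : P) :
    Submodule K (Quotient (QuotientGroup.rightRel H) → A) :=
  ⨅ i : Quotient (QuotientGroup.rightRel H),
    Submodule.comap (LinearMap.proj (R := K) (φ := fun _ => A) i)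
      (if h : ω i * α * (ω i)⁻¹ ∈ H then S.comp ⟨ω i * α * (ω i)⁻¹, h⟩
       else (⊥ : Submodule K A))

open Classical in
lemma mem_transferComp {K : Type*} [CommRing K]
    {A : Type*} [Ring A] [Algebra K A]
    {P : Type*} [Group P] (H : Subgroup P) [DecidableEq P]
    (S : CrossedAlgebra K A H)
    (ω : Quotient (QuotientGroup.rightRel H) → P) (α : P)
    (f : Quotient (QuotientGroup.rightRel H) → A) :
    f ∈ transferComp H S ω α ↔ ∀ i, f i ∈
      (if h : ω i * α * (ω i)⁻¹ ∈ H then S.comp ⟨ω i * α * (ω i)⁻¹, h⟩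
       else (⊥ : Submodule K A)) := by
  simp [transferComp, Submodule.mem_iInf]


/-- Let `G` be a subgroup of finite index in `π` and `L` a crossed
`G`-algebra over `K`, with coset representatives `ω_i` for `i ∈ G\π`. The transfer
`L̃`, with `L̃_α = ⊕_{i : ω_i α ω_i⁻¹ ∈ G} L_{ω_i α ω_i⁻¹}` and componentwise
multiplication (products of elements in different coset components vanish, which
for the model `L̃ ⊆ Π_{i} A` is the pointwise product), is an associative unital
`π`-graded algebra whose unit is the sum of the `[π:G]` copies of `1_L`
(the constant family `1`). -/
theorem transfer_is_graded_algebra {K : Type*} [CommRing K]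
    {A : Type*} [Ring A] [Algebra K A]
    {P : Type*} [Group P] [DecidableEq P] (H : Subgroup P) [H.FiniteIndex]
    (S : CrossedAlgebra K A H)
    (ω : Quotient (QuotientGroup.rightRel H) → P)
    (hω : ∀ i : Quotient (QuotientGroup.rightRel H),
      Quotient.mk (QuotientGroup.rightRel H) (ω i) = i) :
    (∀ α β : P, ∀ f ∈ transferComp H S ω α, ∀ g ∈ transferComp H S ω β,
        f * g ∈ transferComp H S ω (α * β)) ∧
    ((1 : Quotient (QuotientGroup.rightRel H) → A) ∈ transferComp H S ω 1) ∧
    (∀ i, (1 : Quotient (QuotientGroup.rightRel H) → A) i = (1 : A)) ∧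
    (∀ f g h : Quotient (QuotientGroup.rightRel H) → A, f * g * h = f * (g * h)) ∧
    (∀ f : Quotient (QuotientGroup.rightRel H) → A, 1 * f = f ∧ f * 1 = f) ∧
DirectSum.IsInternal (transferComp H S ω) := by
  classical
  obtain ⟨hind, htop⟩ :=
    (DirectSum.isInternal_submodule_iff_iSupIndep_and_iSup_eq_top S.comp).mp S.internal
  refine ⟨?_, ?_, fun i => rfl, fun f g h => mul_assoc f g h,
    fun f => ⟨one_mul f, mul_one f⟩, ?_⟩
  · -- multiplication
    intro α β f hf g hg
    rw [mem_transferComp] at hf hg ⊢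
    intro i
    have hfi := hf i
    have hgi := hg i
    by_cases ha : ω i * α * (ω i)⁻¹ ∈ H
    · by_cases hb : ω i * β * (ω i)⁻¹ ∈ H
      · have hab : ω i * (α * β) * (ω i)⁻¹ ∈ H := by
          have : ω i * (α * β) * (ω i)⁻¹ =
              (ω i * α * (ω i)⁻¹) * (ω i * β * (ω i)⁻¹) := by group
          rw [this]; exact H.mul_mem ha hb
        rw [dif_pos hab]
        rw [dif_pos ha] at hfi
        rw [dif_pos hb] at hgi
        have := S.mul_mem hfi hgi
        have he : (⟨ω i * α * (ω i)⁻¹, ha⟩ * ⟨ω i * β * (ω i)⁻¹, hb⟩ : H)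
            = ⟨ω i * (α * β) * (ω i)⁻¹, hab⟩ := by
          ext; show (ω i * α * (ω i)⁻¹) * (ω i * β * (ω i)⁻¹) = ω i * (α * β) * (ω i)⁻¹
          group
        rw [he] at this
        exact this
      · rw [dif_neg hb, Submodule.mem_bot] at hgi
        have : (f * g) i = 0 := by show f i * g i = 0; rw [hgi, mul_zero]
        rw [this]; exact Submodule.zero_mem _
    · rw [dif_neg ha, Submodule.mem_bot] at hfi
      have : (f * g) i = 0 := by show f i * g i = 0; rw [hfi, zero_mul]
      rw [this]; exact Submodule.zero_mem _
  · -- unit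
    rw [mem_transferComp]
    intro i
    have h1 : ω i * (1 : P) * (ω i)⁻¹ ∈ H := by
      have : ω i * (1 : P) * (ω i)⁻¹ = 1 := by group
      rw [this]; exact H.one_mem
    rw [dif_pos h1]
    have he : (⟨ω i * (1 : P) * (ω i)⁻¹, h1⟩ : H) = 1 := by
      ext; show ω i * (1 : P) * (ω i)⁻¹ = 1; group
    rw [he]
    exact S.one_mem
  · -- internal
    rw [DirectSum.isInternal_submodule_iff_iSupIndep_and_iSup_eq_top]
    constructor
    · -- independence
      intro α
      rw [disjoint_iff_inf_le]
      intro x ⟨hx1, hx2⟩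
      have hx1' := (mem_transferComp H S ω α x).mp hx1
      funext i
      show x i = (0 : A)
      have hxi := hx1' i
      by_cases ha : ω i * α * (ω i)⁻¹ ∈ H
      · set g : H := ⟨ω i * α * (ω i)⁻¹, ha⟩
        -- x i ∈ sup of other components
        have hsup : x i ∈ ⨆ h ≠ g, S.comp h := by
          have hle : (⨆ β, ⨆ _ : β ≠ α, transferComp H S ω β) ≤
              Submodule.comap (LinearMap.proj (R := K) (φ := fun _ => A) i)
                (⨆ h ≠ g, S.comp h) := by
            refine iSup₂_le fun β hβ => ?_
            intro y hy
            have hyi := (mem_transferComp H S ω β y).mp hy i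
            simp only [Submodule.mem_comap, LinearMap.proj_apply]
            by_cases hb : ω i * β * (ω i)⁻¹ ∈ H
            · rw [dif_pos hb] at hyi
              have hne : (⟨ω i * β * (ω i)⁻¹, hb⟩ : H) ≠ g := by
                intro he
                apply hβ
                have : ω i * β * (ω i)⁻¹ = ω i * α * (ω i)⁻¹ := congrArg Subtype.val he
                have := mul_left_cancel (mul_right_cancel this)
                exact this
              exact le_iSup₂ (f := fun h (_ : h ≠ g) => S.comp h) _ hne hyi
            · rw [dif_neg hb, Submodule.mem_bot] at hyi
              rw [hyi]; exact Submodule.zero_mem _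
          exact hle hx2
        have hd := hind g
        rw [disjoint_iff_inf_le] at hd
        have hxg : x i ∈ S.comp g := by rw [dif_pos ha] at hxi; exact hxi
        exact Submodule.mem_bot K |>.mp (hd ⟨hxg, hsup⟩)
      · rw [dif_neg ha, Submodule.mem_bot] at hxi
        exact hxi
    · -- sup = top
      haveI : Finite (Quotient (QuotientGroup.rightRel H)) :=
        Finite.of_equiv _ (QuotientGroup.quotientRightRelEquivQuotientLeftRel H).symm
      haveI := Fintype.ofFinite (Quotient (QuotientGroup.rightRel H))
      rw [eq_top_iff]
      intro x _
      have hx : x = ∑ i, Pi.single i (x i) := by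
        funext j
        rw [Finset.sum_apply]
        rw [Finset.sum_eq_single j]
        · simp
        · intro b _ hb; exact Pi.single_eq_of_ne' hb _
        · intro h; exact absurd (Finset.mem_univ j) h
      rw [hx]
      refine Submodule.sum_mem _ fun i _ => ?_
      -- x i ∈ ⊤ = ⨆ comp
      have hxi : x i ∈ ⨆ h, S.comp h := htop ▸ Submodule.mem_top
      refine Submodule.iSup_induction (motive := fun a =>
        Pi.single i a ∈ ⨆ α, transferComp H S ω α) S.comp hxi ?_ ?_ ?_
      · intro h a ha
        refine le_iSup (transferComp H S ω) ((ω i)⁻¹ * (h : P) * ω i) ?_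
        rw [mem_transferComp]
        intro j
        by_cases hj : j = i
        · subst hj
          have hc : ω j * ((ω j)⁻¹ * (h : P) * ω j) * (ω j)⁻¹ = (h : P) := by group
          have hmem : ω j * ((ω j)⁻¹ * (h : P) * ω j) * (ω j)⁻¹ ∈ H := by
            rw [hc]; exact h.2
          rw [dif_pos hmem]
          have he : (⟨ω j * ((ω j)⁻¹ * (h : P) * ω j) * (ω j)⁻¹, hmem⟩ : H) = h := by
            ext; exact hc
          rw [he, Pi.single_eq_same]
          exact ha
        · rw [Pi.single_eq_of_ne hj]
          split <;> simp
      · show Pi.single (M := fun _ => A) i (0 : A) ∈ _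
        rw [Pi.single_zero]; exact Submodule.zero_mem _
      · intro a b ha hb
        show Pi.single (M := fun _ => A) i (a + b) ∈ _
        rw [Pi.single_add]
        exact Submodule.add_mem _ ha hb
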